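/- Let $p_0 \in (0,1]$, $\lambda \in (0,1)$, and $R \in \mathbb{N}$ with $R \ge 1$. Then $\sum_{r=0}^{\infty} p_0^r\lambda^{r(r-1)/2} \le \sum_{r=0}^{R-1} p_0^r\lambda^{r(r-1)/2} + \left(1 + \sqrt{\frac{2\pi}{-\log\lambda}}\right) p_0^R\lambda^{R(R-1)/2}$. -/

import Mathlib

open MeasureTheory Real Set

private lemma even_mul_pred (n : ℕ) : Even (n * (n - 1)) := by
  rcases Nat.even_or_odd n with h | h
  · exact h.mul_right _
  · rcases n with _ | m
    · simp
    · exact (Nat.Odd.sub_odd h odd_one).mul_left _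

private lemma nat_split (k R : ℕ) (hR : 1 ≤ R) :
    (k + R) * ((k + R) - 1) / 2 = R * (R - 1) / 2 + (k * R + k * (k - 1) / 2) := by
  obtain ⟨S, rfl⟩ : ∃ S, R = S + 1 := ⟨R - 1, by omega⟩
  have hlin : (k + (S + 1)) * ((k + (S + 1)) - 1)
      = (S + 1) * ((S + 1) - 1) + 2 * (k * (S + 1)) + k * (k - 1) := by
    rcases k with _ | j
    · simp
    · have h1 : (j + 1) + (S + 1) - 1 = j + S + 1 := by omega
      have h2 : (j + 1) - 1 = j := by omega
      have h3 : S + 1 - 1 = S := by omega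
      rw [h3, h1, h2]; ring
  obtain ⟨x, hx⟩ := even_mul_pred (k + (S + 1))
  obtain ⟨y, hy⟩ := even_mul_pred (S + 1)
  obtain ⟨z, hz⟩ := even_mul_pred k
  omega

private lemma nat_ge (k R : ℕ) (hR : 1 ≤ R) : k * k ≤ 2 * (k * R + k * (k - 1) / 2) := by
  have h1 : k * 1 ≤ k * R := Nat.mul_le_mul_left k hR
  obtain ⟨z, hz⟩ := even_mul_pred k
  have h3 : k * (k - 1) + k = k * k := by
    rcases k with _ | j
    · simp
    · simp only [Nat.succ_sub_one]; ring
  omega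

private lemma gauss_tsum_le (c : ℝ) (hc : 0 < c) :
    ∑' k : ℕ, Real.exp (-c * (k : ℝ) ^ 2) ≤ 1 + Real.sqrt (Real.pi / c) / 2 := by
  have hnn : (0:ℝ) ≤ 1 + Real.sqrt (Real.pi / c) / 2 := by positivity
  apply Real.tsum_le_of_sum_range_le (fun n => Real.exp_nonneg _)
  intro n
  rcases n with _ | n
  · simpa using hnn
  rw [Finset.sum_range_succ']
  have h0 : Real.exp (-c * ((0:ℕ) : ℝ) ^ 2) = 1 := by norm_num
  rw [h0]
  have hanti : AntitoneOn (fun x : ℝ => Real.exp (-c * x ^ 2)) (Icc (0:ℝ) (0 + n)) := by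
    intro x hx y hy hxy
    have hxy2 : x ^ 2 ≤ y ^ 2 := by nlinarith [hx.1]
    exact Real.exp_le_exp.2 (by nlinarith [hc.le])
  have hs := hanti.sum_le_integral
  have hint : ∫ x in (0:ℝ)..(0 + (n:ℝ)), Real.exp (-c * x ^ 2)
      ≤ Real.sqrt (Real.pi / c) / 2 := by
    rw [zero_add, intervalIntegral.integral_of_le (by positivity)]
    rw [← integral_gaussian_Ioi c]
    apply setIntegral_mono_set ((integrable_exp_neg_mul_sq hc).integrableOn)
    · exact Filter.Eventually.of_forall fun x => Real.exp_nonneg _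
    · exact Filter.Eventually.of_forall Ioc_subset_Ioi_self
  have hsum : ∑ i ∈ Finset.range n, Real.exp (-c * ((i + 1 : ℕ) : ℝ) ^ 2)
      ≤ Real.sqrt (Real.pi / c) / 2 := by
    refine le_trans (le_of_eq ?_) (hs.trans hint)
    apply Finset.sum_congr rfl
    intro i _
    norm_num
  linarith

theorem stmt_8 (p0 l : ℝ) (hp0 : p0 ∈ Set.Ioc (0:ℝ) 1) (hl : l ∈ Set.Ioo (0:ℝ) 1)
    (R : ℕ) (hR : 1 ≤ R) :
    ∑' r : ℕ, p0 ^ r * l ^ (r * (r - 1) / 2)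
      ≤ (∑ r ∈ Finset.range R, p0 ^ r * l ^ (r * (r - 1) / 2))
        + (1 + Real.sqrt (2 * Real.pi / (-Real.log l))) * p0 ^ R * l ^ (R * (R - 1) / 2) := by
  obtain ⟨hp0pos, hp0le⟩ := hp0
  obtain ⟨hl0, hl1⟩ := hl
  set a : ℝ := -Real.log l with ha_def
  have ha : 0 < a := by
    have := Real.log_neg hl0 hl1
    simp only [ha_def]; linarith
  set f : ℕ → ℝ := fun r => p0 ^ r * l ^ (r * (r - 1) / 2) with hf_def
  have hfnn : ∀ r, 0 ≤ f r := fun r => by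
    simp only [hf_def]; positivity
  -- l ^ m = exp (-(a * m))
  have hlm : ∀ m : ℕ, l ^ m = Real.exp (-(a * m)) := by
    intro m
    rw [← Real.exp_log hl0, ← Real.exp_nat_mul]
    congr 1
    simp only [ha_def]; ring
  -- summability of f
  have hsumf : Summable f := by
    apply Summable.of_nonneg_of_le (f := fun r => l⁻¹ * l ^ r) hfnn
    · intro r
      have h1 : l ^ (r * (r - 1) / 2) ≤ l⁻¹ * l ^ r := by
        have hle : r - 1 ≤ r * (r - 1) / 2 := by
          rcases le_or_gt r 1 with h | h
          · interval_cases r <;> simp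
          · have h2 : 2 * (r - 1) ≤ r * (r - 1) := Nat.mul_le_mul_right _ h
            omega
        calc l ^ (r * (r - 1) / 2) ≤ l ^ (r - 1) :=
              pow_le_pow_of_le_one hl0.le hl1.le hle
          _ ≤ l⁻¹ * l ^ r := by
            rcases r with _ | j
            · have hone : (1:ℝ) ≤ l⁻¹ := by
                have h1 : l⁻¹ * l = 1 := inv_mul_cancel₀ hl0.ne'
                nlinarith [inv_nonneg.2 hl0.le]
              simpa using hone
            · apply le_of_eq
              rw [Nat.succ_sub_one, pow_succ, mul_comm (l ^ j) l, ← mul_assoc,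
                inv_mul_cancel₀ hl0.ne', one_mul]
      have h2 : p0 ^ r ≤ 1 := pow_le_one₀ hp0pos.le hp0le
      calc f r ≤ 1 * l ^ (r * (r - 1) / 2) := by
            simp only [hf_def]
            apply mul_le_mul_of_nonneg_right h2 (by positivity)
        _ = l ^ (r * (r - 1) / 2) := one_mul _
        _ ≤ l⁻¹ * l ^ r := h1
    · exact (summable_geometric_of_lt_one hl0.le hl1).mul_left _
  set C : ℝ := p0 ^ R * l ^ (R * (R - 1) / 2) with hC_def
  have hCnn : 0 ≤ C := by positivity
  -- pointwise bound on the tail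
  have hfle : ∀ k : ℕ, f (k + R) ≤ C * Real.exp (-(a / 2) * (k : ℝ) ^ 2) := by
    intro k
    have hsplit := nat_split k R hR
    set m : ℕ := k * R + k * (k - 1) / 2 with hm_def
    have : f (k + R) = (p0 ^ k * l ^ m) * C := by
      simp only [hf_def, hC_def, hsplit, pow_add]
      ring
    rw [this]
    have hlmle : l ^ m ≤ Real.exp (-(a / 2) * (k : ℝ) ^ 2) := by
      rw [hlm m]
      apply Real.exp_le_exp.2
      have hk2 : ((k * k : ℕ) : ℝ) ≤ ((2 * m : ℕ) : ℝ) := by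
        exact_mod_cast nat_ge k R hR
      push_cast at hk2
      nlinarith
    have hp0k : p0 ^ k ≤ 1 := pow_le_one₀ hp0pos.le hp0le
    calc (p0 ^ k * l ^ m) * C ≤ (1 * Real.exp (-(a / 2) * (k : ℝ) ^ 2)) * C := by
          apply mul_le_mul_of_nonneg_right _ hCnn
          apply mul_le_mul hp0k hlmle (by positivity) zero_le_one
      _ = C * Real.exp (-(a / 2) * (k : ℝ) ^ 2) := by ring
  -- summability of the gaussian majorant
  have hsumg : Summable (fun k : ℕ => Real.exp (-(a / 2) * (k : ℝ) ^ 2)) := by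
    apply Summable.of_nonneg_of_le (f := fun k : ℕ => Real.exp (-(a / 2)) ^ k)
      (fun k => Real.exp_nonneg _)
    · intro k
      rw [← Real.exp_nat_mul]
      apply Real.exp_le_exp.2
      have : (k : ℝ) ≤ (k : ℝ) ^ 2 := by
        rcases k with _ | j
        · simp
        · have : (1:ℝ) ≤ (j + 1 : ℕ) := by exact_mod_cast Nat.succ_le_succ (Nat.zero_le j)
          nlinarith
      nlinarith
    · exact summable_geometric_of_lt_one (Real.exp_nonneg _)
        (Real.exp_lt_one_iff.2 (by linarith))
  -- split the sum
  rw [← hsumf.sum_add_tsum_nat_add R]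
  have htail : ∑' k : ℕ, f (k + R) ≤ (1 + Real.sqrt (2 * Real.pi / a)) * C := by
    have h1 : ∑' k : ℕ, f (k + R) ≤ ∑' k : ℕ, C * Real.exp (-(a / 2) * (k : ℝ) ^ 2) :=
      Summable.tsum_le_tsum hfle ((summable_nat_add_iff R).2 hsumf) (hsumg.mul_left C)
    have h2 : ∑' k : ℕ, C * Real.exp (-(a / 2) * (k : ℝ) ^ 2)
        = C * ∑' k : ℕ, Real.exp (-(a / 2) * (k : ℝ) ^ 2) := tsum_mul_left
    have h3 := gauss_tsum_le (a / 2) (by linarith)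
    have h4 : Real.sqrt (Real.pi / (a / 2)) = Real.sqrt (2 * Real.pi / a) := by
      congr 1
      field_simp
    rw [h4] at h3
    have h5 : 1 + Real.sqrt (2 * Real.pi / a) / 2 ≤ 1 + Real.sqrt (2 * Real.pi / a) := by
      have := Real.sqrt_nonneg (2 * Real.pi / a)
      linarith
    calc ∑' k : ℕ, f (k + R) ≤ C * ∑' k : ℕ, Real.exp (-(a / 2) * (k : ℝ) ^ 2) := by
          rw [← h2]; exact h1
      _ ≤ C * (1 + Real.sqrt (2 * Real.pi / a)) :=
          mul_le_mul_of_nonneg_left (h3.trans h5) hCnn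
      _ = (1 + Real.sqrt (2 * Real.pi / a)) * C := mul_comm _ _
  have : (1 + Real.sqrt (2 * Real.pi / (-Real.log l))) * p0 ^ R * l ^ (R * (R - 1) / 2)
      = (1 + Real.sqrt (2 * Real.pi / a)) * C := by
    simp only [hC_def, ha_def]; ring
  rw [this]
  exact add_le_add le_rfl htail
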